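/- Let S be the left shift on ℓ²(ℕ), p the projection onto span{e₀}, and t the bilateral shift on ℓ²(ℤ). Define on ℓ²(ℕ)⊗ℓ²(ℕ)⊗ℓ²(ℤ) the elements B₁(r,n,m) = S*^{n₁}S^{m₁} ⊗ S*^{n₁}S^{m₁} ⊗ t^r with r = m₁ - n₁, B₂(r,n,m) = S*^{n₁}S^{m₁} ⊗ S*^{n₂}pS^{m₂} ⊗ t^r with r = m₁-n₁, n₁ ≥ n₂, m₁ ≥ m₂, B₃(r,n,m) = S*^{n₁}pS^{m₁} ⊗ S*^{n₂}S^{m₂} ⊗ t^r with r = m₂-n₂, n₁ ≤ n₂, m₁ ≤ m₂, and B₄(r,n,m) = S*^{n₁}pS^{m₁} ⊗ S*^{n₂}pS^{m₂} ⊗ t^r. Then the set T consisting of 0 together with all the B_i(r,n,m) is closed under operator multiplication and under taking adjoints, and for every nonzero a ∈ T one has a a* a = a and a* a a* = a*; hence T is an inverse semigroup with zero. -/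

import Mathlib

open ContinuousLinearMap
open scoped Classical

noncomputable section

namespace SOq

variable {H : Type} [NormedAddCommGroup H] [InnerProductSpace ℂ H] [CompleteSpace H]

/-- `pj A = 1 - A* A`; for the left shift this is the rank-one projection onto `e 0`. -/
def pj (A : H →L[ℂ] H) : H →L[ℂ] H := 1 - adjoint A * A

/-- `B₁(r,n,m) = S*^{n₁} S^{m₁} ⊗ S*^{n₁} S^{m₁} ⊗ t^r`, where `A`, `B'` are the shifts
acting on the first, resp. second, tensor factor and `T' r` is `1 ⊗ 1 ⊗ t^r`. -/
def B1 (A B' : H →L[ℂ] H) (T' : ℤ → (H →L[ℂ] H)) (r : ℤ) (n m : ℕ × ℕ) : H →L[ℂ] H :=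
  (adjoint A) ^ n.1 * A ^ m.1 * (adjoint B') ^ n.1 * B' ^ m.1 * T' r

/-- `B₂(r,n,m) = S*^{n₁} S^{m₁} ⊗ S*^{n₂} p S^{m₂} ⊗ t^r`. -/
def B2 (A B' : H →L[ℂ] H) (T' : ℤ → (H →L[ℂ] H)) (r : ℤ) (n m : ℕ × ℕ) : H →L[ℂ] H :=
  (adjoint A) ^ n.1 * A ^ m.1 * (adjoint B') ^ n.2 * pj B' * B' ^ m.2 * T' r

/-- `B₃(r,n,m) = S*^{n₁} p S^{m₁} ⊗ S*^{n₂} S^{m₂} ⊗ t^r`. -/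
def B3 (A B' : H →L[ℂ] H) (T' : ℤ → (H →L[ℂ] H)) (r : ℤ) (n m : ℕ × ℕ) : H →L[ℂ] H :=
  (adjoint A) ^ n.1 * pj A * A ^ m.1 * (adjoint B') ^ n.2 * B' ^ m.2 * T' r

/-- `B₄(r,n,m) = S*^{n₁} p S^{m₁} ⊗ S*^{n₂} p S^{m₂} ⊗ t^r`. -/
def B4 (A B' : H →L[ℂ] H) (T' : ℤ → (H →L[ℂ] H)) (r : ℤ) (n m : ℕ × ℕ) : H →L[ℂ] H :=
  (adjoint A) ^ n.1 * pj A * A ^ m.1 * (adjoint B') ^ n.2 * pj B' * B' ^ m.2 * T' r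

/-- `P_i(n) = B_i(0,n,n)`. -/
def P1 (A B' : H →L[ℂ] H) (T' : ℤ → (H →L[ℂ] H)) (n : ℕ × ℕ) : H →L[ℂ] H := B1 A B' T' 0 n n
def P2 (A B' : H →L[ℂ] H) (T' : ℤ → (H →L[ℂ] H)) (n : ℕ × ℕ) : H →L[ℂ] H := B2 A B' T' 0 n n
def P3 (A B' : H →L[ℂ] H) (T' : ℤ → (H →L[ℂ] H)) (n : ℕ × ℕ) : H →L[ℂ] H := B3 A B' T' 0 n n
def P4 (A B' : H →L[ℂ] H) (T' : ℤ → (H →L[ℂ] H)) (n : ℕ × ℕ) : H →L[ℂ] H := B4 A B' T' 0 n n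

/-- The hypotheses identifying `H` with `ℓ²(ℕ)⊗ℓ²(ℕ)⊗ℓ²(ℤ)` with orthonormal basis `e`,
`A = S⊗1⊗1`, `B' = 1⊗S⊗1` (left shifts) and `T' r = 1⊗1⊗t^r` (bilateral shift powers). -/
def ShiftHyp (e : HilbertBasis (ℕ × ℕ × ℤ) ℂ H) (A B' : H →L[ℂ] H)
    (T' : ℤ → (H →L[ℂ] H)) : Prop :=
  (∀ (j : ℕ) (k : ℤ), A (e (0, j, k)) = 0) ∧
  (∀ (i j : ℕ) (k : ℤ), A (e (i + 1, j, k)) = e (i, j, k)) ∧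
  (∀ (i : ℕ) (k : ℤ), B' (e (i, 0, k)) = 0) ∧
  (∀ (i j : ℕ) (k : ℤ), B' (e (i, j + 1, k)) = e (i, j, k)) ∧
  (∀ (r : ℤ) (i j : ℕ) (k : ℤ), T' r (e (i, j, k)) = e (i, j, k + r))

/-- The inverse semigroup `T`: zero together with all admissible words `B_i(r,n,m)`. -/
def TSet (A B' : H →L[ℂ] H) (T' : ℤ → (H →L[ℂ] H)) : Set (H →L[ℂ] H) :=
  {0} ∪ {x | ∃ n m : ℕ × ℕ, x = B1 A B' T' ((m.1 : ℤ) - n.1) n m} ∪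
  {x | ∃ n m : ℕ × ℕ, n.2 ≤ n.1 ∧ m.2 ≤ m.1 ∧ x = B2 A B' T' ((m.1 : ℤ) - n.1) n m} ∪
  {x | ∃ n m : ℕ × ℕ, n.1 ≤ n.2 ∧ m.1 ≤ m.2 ∧ x = B3 A B' T' ((m.2 : ℤ) - n.2) n m} ∪
  {x | ∃ (r : ℤ) (n m : ℕ × ℕ), x = B4 A B' T' r n m}

/-- The projection semilattice `E` of `T`. -/
def ESet (A B' : H →L[ℂ] H) (T' : ℤ → (H →L[ℂ] H)) : Set (H →L[ℂ] H) :=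
  {0} ∪ {x | ∃ n : ℕ, x = P1 A B' T' (n, n)} ∪
  {x | ∃ n : ℕ × ℕ, n.2 ≤ n.1 ∧ x = P2 A B' T' n} ∪
  {x | ∃ n : ℕ × ℕ, n.1 ≤ n.2 ∧ x = P3 A B' T' n} ∪
  {x | ∃ n : ℕ × ℕ, x = P4 A B' T' n}

/-- A filter in a semilattice-with-zero `E` of projections (`e ≤ f ↔ e * f = e`). -/
def IsFilterIn {X : Type} [Ring X] (E A : Set X) : Prop :=
  A ⊆ E ∧ (0 : X) ∉ A ∧ (∀ a ∈ A, ∀ f ∈ E, a * f = a → f ∈ A) ∧ ∀ a ∈ A, ∀ b ∈ A, a * b ∈ A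

/-- An ultrafilter: a maximal filter. -/
def IsUltrafilterIn {X : Type} [Ring X] (E A : Set X) : Prop :=
  IsFilterIn E A ∧ ∀ B, IsFilterIn E B → A ⊆ B → B = A

/-- `A_{Λ(k)}` for finite `k ∈ ℕ²`. -/
def ALamFin (A B' : H →L[ℂ] H) (T' : ℤ → (H →L[ℂ] H)) (k : ℕ × ℕ) : Set (H →L[ℂ] H) :=
  {x | ∃ n : ℕ, n ≤ min k.1 k.2 ∧ x = P1 A B' T' (n, n)} ∪
  {x | ∃ n : ℕ × ℕ, n.2 = k.2 ∧ n.2 ≤ n.1 ∧ n.1 ≤ k.1 ∧ x = P2 A B' T' n} ∪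
  {x | ∃ n : ℕ × ℕ, n.1 = k.1 ∧ n.1 ≤ n.2 ∧ n.2 ≤ k.2 ∧ x = P3 A B' T' n} ∪
  {P4 A B' T' k}

/-- `A_{Λ(k)}` for `k ∈ (ℕ∪{∞})²`, with `∞` encoded as `none`. -/
def ALam (A B' : H →L[ℂ] H) (T' : ℤ → (H →L[ℂ] H)) :
    Option ℕ × Option ℕ → Set (H →L[ℂ] H) := fun k =>
  match k with
  | (some k1, some k2) => ALamFin A B' T' (k1, k2)
  | (some k1, none) =>
      {x | ∃ n : ℕ, n ≤ k1 ∧ x = P1 A B' T' (n, n)} ∪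
      {x | ∃ l : ℕ, k1 ≤ l ∧ x = P3 A B' T' (k1, l)}
  | (none, some k2) =>
      {x | ∃ n : ℕ, n ≤ k2 ∧ x = P1 A B' T' (n, n)} ∪
      {x | ∃ l : ℕ, k2 ≤ l ∧ x = P2 A B' T' (l, k2)}
  | (none, none) => {x | ∃ l : ℕ, x = P1 A B' T' (l, l)}

/-- The character (indicator function) of a subset. -/
def charOf {X : Type} (s : Set X) : X → Bool := fun x => decide (x ∈ s)

/-- Characters on `E`: nonzero multiplicative `{0,1}`-valued maps killing `0`. -/
def IsChar {X : Type} [Ring X] (E : Set X) (x : X → Bool) : Prop :=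
  (∃ a ∈ E, x a = true) ∧ x 0 = false ∧ ∀ a ∈ E, ∀ b ∈ E, x (a * b) = (x a && x b)

/-- `n ≤ k` for `n : ℕ` and `k ∈ ℕ∪{∞}` (`∞ = none`). -/
def leO (n : ℕ) (k : Option ℕ) : Prop := ∀ m : ℕ, k = some m → n ≤ m

/-- The domain set `D_s = {x ∈ Ê_tight : x(s s*) = 1}` (tight = ultrafilter characters). -/
def Dset (A B' : H →L[ℂ] H) (T' : ℤ → (H →L[ℂ] H)) (s : H →L[ℂ] H) :
    Set ((H →L[ℂ] H) → Bool) :=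
  {x | (∃ Aset, IsUltrafilterIn (ESet A B' T') Aset ∧ x = charOf Aset) ∧
    x (s * adjoint s) = true}


end SOq

set_option linter.unusedSectionVars false
set_option maxHeartbeats 1000000

namespace SOqAux
variable {R : Type*} [Ring R] [StarRing R]

def pj' (X : R) : R := 1 - star X * X

def W (X : R) (b : Bool) (n m : ℕ) : R := (star X) ^ n * ((cond b (pj' X) 1) * X ^ m)

theorem star_pj {X : R} : star (pj' X) = pj' X := by
  simp [pj', star_mul, mul_assoc]

theorem star_W {X : R} (b : Bool) (n m : ℕ) : star (W X b n m) = W X b m n := by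
  cases b <;> simp [W, star_pow, star_mul, star_pj, mul_assoc]

variable {X : R} (hX : X * star X = 1)
include hX

theorem pow_mul_pow_star (k : ℕ) (y : R) : X ^ k * ((star X) ^ k * y) = y := by
  induction k with
  | zero => simp
  | succ k ih =>
    calc X ^ (k+1) * ((star X) ^ (k+1) * y) = X ^ k * (X * (star X * ((star X) ^ k * y))) := by
          rw [pow_succ, pow_succ']; simp only [mul_assoc]
    _ = X ^ k * ((star X) ^ k * y) := by rw [← mul_assoc X, hX, one_mul]
    _ = y := ih

theorem pow_star_of_le {p m : ℕ} (h : p ≤ m) (y : R) :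
    X ^ m * ((star X) ^ p * y) = X ^ (m - p) * y := by
  conv_lhs => rw [show m = (m - p) + p by omega, pow_add, mul_assoc, pow_mul_pow_star hX]

theorem pow_star_of_ge {p m : ℕ} (h : m ≤ p) (y : R) :
    X ^ m * ((star X) ^ p * y) = (star X) ^ (p - m) * y := by
  conv_lhs => rw [show p = m + (p - m) by omega, pow_add, mul_assoc,
    ← mul_assoc ((star X) ^ m), ← mul_assoc (X ^ m), pow_mul_pow_star hX]

theorem X_pj (y : R) : X * (pj' X * y) = 0 := by
  rw [← mul_assoc]
  simp only [pj', mul_sub, mul_one, ← mul_assoc, hX, one_mul, sub_self, zero_mul]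

theorem pj_star (y : R) : pj' X * (star X * y) = 0 := by
  rw [← mul_assoc]
  simp only [pj', sub_mul, one_mul, mul_assoc, hX, mul_one, sub_self, zero_mul]

theorem pj_pj_self : pj' X * pj' X = pj' X := by
  nth_rewrite 2 [pj']
  rw [mul_sub, mul_one, pj_star hX, sub_zero]

theorem pj_pj (y : R) : pj' X * (pj' X * y) = pj' X * y := by
  rw [← mul_assoc, pj_pj_self hX]

theorem pow_pj {d : ℕ} (h : 0 < d) (y : R) : X ^ d * (pj' X * y) = 0 := by
  rw [show d = (d - 1) + 1 by omega, pow_succ, mul_assoc, X_pj hX, mul_zero]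

theorem pj_star_pow {d : ℕ} (h : 0 < d) (y : R) : pj' X * ((star X) ^ d * y) = 0 := by
  rw [show d = 1 + (d - 1) by omega, pow_add, pow_one, mul_assoc, pj_star hX]

theorem pow_pow {n d : ℕ} (y : R) : (star X) ^ n * ((star X) ^ d * y) = (star X) ^ (n + d) * y := by
  rw [← mul_assoc, ← pow_add]

theorem W_mul_case1 {b c : Bool} {n m p q : ℕ} (h : p ≤ m) (hc : c = true → m = p) :
    W X b n m * W X c p q = W X (b || c) n (m - p + q) := by
  cases c with
  | false =>
    simp only [W, cond_false, one_mul, Bool.or_false, mul_assoc]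
    rw [pow_star_of_le hX h, ← pow_add]
  | true =>
    rw [hc rfl] at h ⊢
    simp only [W, cond_true, one_mul, Bool.or_true, mul_assoc, Nat.sub_self, Nat.zero_add,
      pow_star_of_le hX (le_refl p), pow_zero]
    cases b <;> simp [pj_pj hX]

theorem W_mul_case2 {b c : Bool} {n m p q : ℕ} (h : m ≤ p) (hb : b = true → m = p) :
    W X b n m * W X c p q = W X (b || c) (n + p - m) q := by
  cases b with
  | false =>
    simp only [W, cond_false, one_mul, Bool.false_or, mul_assoc]
    rw [pow_star_of_ge hX h, pow_pow hX]
    congr 2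
    omega
  | true =>
    rw [hb rfl] at h ⊢
    simp only [W, cond_true, Bool.true_or, Nat.add_sub_cancel, mul_assoc,
      pow_star_of_ge hX (le_refl p), Nat.sub_self, pow_zero, one_mul]
    cases c <;> simp [pj_pj hX]

theorem W_mul_zero1 {c : Bool} {n m p q : ℕ} (h : m < p) :
    W X true n m * W X c p q = 0 := by
  simp only [W, cond_true, mul_assoc]
  rw [pow_star_of_ge hX h.le, pj_star_pow hX (by omega), mul_zero]

theorem W_mul_zero2 {b : Bool} {n m p q : ℕ} (h : p < m) :
    W X b n m * W X true p q = 0 := by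
  simp only [W, cond_true, mul_assoc]
  rw [pow_star_of_le hX h.le, pow_pj hX (show 0 < m - p by omega)]
  cases b <;> simp

theorem W_mul_total (b c : Bool) (n m p q : ℕ) :
    W X b n m * W X c p q = 0 ∨ ∃ n' m', W X b n m * W X c p q = W X (b || c) n' m' ∧
      ((p ≤ m ∧ (c = true → m = p) ∧ n' = n ∧ m' = m - p + q) ∨
       (m ≤ p ∧ (b = true → m = p) ∧ n' = n + p - m ∧ m' = q)) := by
  rcases lt_trichotomy m p with h | h | h
  · cases b with
    | true => exact Or.inl (W_mul_zero1 hX h)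
    | false => exact Or.inr ⟨_, _, W_mul_case2 hX h.le (by simp), Or.inr ⟨h.le, by simp, rfl, rfl⟩⟩
  · subst h
    exact Or.inr ⟨_, _, W_mul_case1 hX le_rfl (fun _ => rfl), Or.inl ⟨le_rfl, fun _ => rfl, rfl, rfl⟩⟩
  · cases c with
    | true => exact Or.inl (W_mul_zero2 hX h)
    | false => exact Or.inr ⟨_, _, W_mul_case1 hX h.le (by simp), Or.inl ⟨h.le, by simp, rfl, rfl⟩⟩

end SOqAux

namespace SOqAux
variable {R : Type*} [Ring R] [StarRing R]

structure Rel (X Y : R) (T : ℤ → R) : Prop where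
  hX : X * star X = 1
  hY : Y * star Y = 1
  hXY : Commute X Y
  hXYs : Commute X (star Y)
  hTX : ∀ r, Commute (T r) X
  hTY : ∀ r, Commute (T r) Y
  hT : ∀ r s, T r * T s = T (r + s)
  hT0 : T 0 = 1
  hTs : ∀ r, star (T r) = T (-r)

variable {X Y : R} {T : ℤ → R} (h : Rel X Y T)
include h

theorem Rel.hXsY : Commute (star X) Y := by
  simpa using h.hXYs.star_star

theorem Rel.hXsYs : Commute (star X) (star Y) := h.hXY.star_star

theorem Rel.hTXs (r : ℤ) : Commute (T r) (star X) := by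
  have := (h.hTX (-r)).star_star
  rwa [h.hTs, neg_neg] at this

theorem Rel.hTYs (r : ℤ) : Commute (T r) (star Y) := by
  have := (h.hTY (-r)).star_star
  rwa [h.hTs, neg_neg] at this

theorem Rel.pjXY : Commute (pj' X) Y :=
  (Commute.one_left Y).sub_left ((h.hXsY).mul_left h.hXY)

theorem Rel.pjXYs : Commute (pj' X) (star Y) :=
  (Commute.one_left _).sub_left ((h.hXsYs).mul_left h.hXYs)

theorem Rel.pjYX : Commute X (pj' Y) :=
  (Commute.one_right X).sub_right ((h.hXYs).mul_right h.hXY)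

theorem Rel.pjYXs : Commute (star X) (pj' Y) :=
  (Commute.one_right _).sub_right ((h.hXsYs).mul_right h.hXsY)

theorem Rel.pjXpjY : Commute (pj' X) (pj' Y) :=
  (Commute.one_right _).sub_right ((h.pjXYs).mul_right h.pjXY)

theorem Rel.TpjX (r : ℤ) : Commute (T r) (pj' X) :=
  (Commute.one_right _).sub_right ((h.hTXs r).mul_right (h.hTX r))

theorem Rel.TpjY (r : ℤ) : Commute (T r) (pj' Y) :=
  (Commute.one_right _).sub_right ((h.hTYs r).mul_right (h.hTY r))

omit h in
theorem comm3 {a1 a2 a3 b1 b2 b3 : R}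
    (h11 : Commute a1 b1) (h12 : Commute a1 b2) (h13 : Commute a1 b3)
    (h21 : Commute a2 b1) (h22 : Commute a2 b2) (h23 : Commute a2 b3)
    (h31 : Commute a3 b1) (h32 : Commute a3 b2) (h33 : Commute a3 b3) :
    Commute (a1 * (a2 * a3)) (b1 * (b2 * b3)) :=
  (h11.mul_right (h12.mul_right h13)).mul_left
    ((h21.mul_right (h22.mul_right h23)).mul_left
      (h31.mul_right (h32.mul_right h33)))

theorem Rel.commW (b c : Bool) (n m p q : ℕ) : Commute (W X b n m) (W Y c p q) := by
  have h1 : Commute (cond b (pj' X) 1) (cond c (pj' Y) 1) := by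
    cases b <;> cases c <;>
      simp [Commute.one_left, Commute.one_right, h.pjXpjY]
  have h2 : Commute ((star X) ^ n) (cond c (pj' Y) 1) := by
    cases c <;> simp [Commute.one_right, (h.pjYXs).pow_left]
  have h3 : Commute (cond b (pj' X) 1) ((star Y) ^ p) := by
    cases b <;> simp [Commute.one_left, (h.pjXYs).pow_right]
  have h4 : Commute (cond b (pj' X) 1) (Y ^ q) := by
    cases b <;> simp [Commute.one_left, (h.pjXY).pow_right]
  have h5 : Commute (X ^ m) (cond c (pj' Y) 1) := by
    cases c <;> simp [Commute.one_right, (h.pjYX).pow_left]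
  exact comm3 (h.hXsYs.pow_pow n p) h2 (h.hXsY.pow_pow n q)
    h3 h1 h4
    (h.hXYs.pow_pow m p) h5 (h.hXY.pow_pow m q)

theorem Rel.commTWX (r : ℤ) (b : Bool) (n m : ℕ) : Commute (T r) (W X b n m) := by
  have hc : Commute (T r) (cond b (pj' X) 1) := by
    cases b <;> simp [Commute.one_right, h.TpjX r]
  exact ((h.hTXs r).pow_right n).mul_right (hc.mul_right ((h.hTX r).pow_right m))

theorem Rel.commTWY (r : ℤ) (b : Bool) (n m : ℕ) : Commute (T r) (W Y b n m) := by
  have hc : Commute (T r) (cond b (pj' Y) 1) := by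
    cases b <;> simp [Commute.one_right, h.TpjY r]
  exact ((h.hTYs r).pow_right n).mul_right (hc.mul_right ((h.hTY r).pow_right m))

omit h in
theorem comm_swap {a b : R} (hab : Commute a b) (y : R) : a * (b * y) = b * (a * y) := by
  rw [← mul_assoc, hab.eq, mul_assoc]

def Wd (X Y : R) (T : ℤ → R) (b : Bool × Bool) (n m : ℕ × ℕ) (r : ℤ) : R :=
  W X b.1 n.1 m.1 * (W Y b.2 n.2 m.2 * T r)

theorem Wd_mul_arrange (b c : Bool × Bool) (n m p q : ℕ × ℕ) (r s : ℤ) :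
    Wd X Y T b n m r * Wd X Y T c p q s =
      (W X b.1 n.1 m.1 * W X c.1 p.1 q.1) *
        ((W Y b.2 n.2 m.2 * W Y c.2 p.2 q.2) * T (r + s)) := by
  simp only [Wd, mul_assoc]
  rw [comm_swap (h.commTWX r c.1 p.1 q.1), comm_swap (h.commTWY r c.2 p.2 q.2),
    h.hT r s]
  rw [comm_swap ((h.commW c.1 b.2 p.1 q.1 n.2 m.2).symm)]

theorem star_Wd (b : Bool × Bool) (n m : ℕ × ℕ) (r : ℤ) :
    star (Wd X Y T b n m r) = Wd X Y T b m n (-r) := by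
  simp only [Wd, star_mul, star_W, h.hTs, mul_assoc]
  rw [comm_swap (h.commTWY (-r) b.2 m.2 n.2), (h.commTWX (-r) b.1 m.1 n.1).eq,
    ← mul_assoc, ← mul_assoc, ← (h.commW b.1 b.2 m.1 n.1 m.2 n.2).eq, mul_assoc]

theorem Wd_sandwich (b : Bool × Bool) (n m : ℕ × ℕ) (r : ℤ) :
    Wd X Y T b n m r * star (Wd X Y T b n m r) * Wd X Y T b n m r = Wd X Y T b n m r := by
  rw [star_Wd h]
  rw [Wd_mul_arrange h, W_mul_case1 h.hX le_rfl (fun _ => rfl),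
    W_mul_case1 h.hY le_rfl (fun _ => rfl)]
  simp only [Nat.sub_self, Nat.zero_add, Bool.or_self, add_neg_cancel]
  show Wd X Y T (b.1, b.2) (n.1, n.2) (n.1, n.2) 0 * Wd X Y T b n m r = Wd X Y T b n m r
  rw [Wd_mul_arrange h, W_mul_case1 h.hX le_rfl (fun _ => rfl),
    W_mul_case1 h.hY le_rfl (fun _ => rfl)]
  simp only [Nat.sub_self, Nat.zero_add, Bool.or_self, zero_add]
  rfl

end SOqAux


namespace SOq

section Helpers

variable {H : Type} [NormedAddCommGroup H] [InnerProductSpace ℂ H] [CompleteSpace H]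

theorem ext_basis {ι : Type*} (e : HilbertBasis ι ℂ H) {f g : H →L[ℂ] H}
    (h : ∀ i, f (e i) = g (e i)) : f = g := by
  refine ContinuousLinearMap.ext_on
    (Submodule.dense_iff_topologicalClosure_eq_top.mpr e.dense_span) ?_
  rintro _ ⟨i, rfl⟩
  exact h i

theorem ext_inner_basis {ι : Type*} (e : HilbertBasis ι ℂ H) {x y : H}
    (h : ∀ i, (inner ℂ (e i) x : ℂ) = inner ℂ (e i) y) : x = y := by
  apply e.repr.injective
  ext i
  rw [e.repr_apply_apply, e.repr_apply_apply]
  exact h i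

theorem rel_of_shiftHyp (e : HilbertBasis (ℕ × ℕ × ℤ) ℂ H) (A B' : H →L[ℂ] H)
    (T' : ℤ → (H →L[ℂ] H)) (hyp : ShiftHyp e A B' T') : SOqAux.Rel A B' T' := by
  obtain ⟨h1, h2, h3, h4, h5⟩ := hyp
  have ho := orthonormal_iff_ite.mp e.orthonormal
  have hAs : ∀ i j k, star A (e (i, j, k)) = e (i + 1, j, k) := by
    intro i j k
    apply ext_inner_basis e
    rintro ⟨a, b, c⟩
    rw [ContinuousLinearMap.star_eq_adjoint, ContinuousLinearMap.adjoint_inner_right]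
    cases a with
    | zero => rw [h1 b c, inner_zero_left, ho]; simp [Prod.ext_iff]
    | succ a =>
      rw [h2 a b c, ho, ho]
      exact if_congr (by simp [Prod.ext_iff]) rfl rfl
  have hBs : ∀ i j k, star B' (e (i, j, k)) = e (i, j + 1, k) := by
    intro i j k
    apply ext_inner_basis e
    rintro ⟨a, b, c⟩
    rw [ContinuousLinearMap.star_eq_adjoint, ContinuousLinearMap.adjoint_inner_right]
    cases b with
    | zero => rw [h3 a c, inner_zero_left, ho]; simp [Prod.ext_iff]
    | succ b =>
      rw [h4 a b c, ho, ho]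
      exact if_congr (by simp [Prod.ext_iff]) rfl rfl
  have hTsb : ∀ r i j k, star (T' r) (e (i, j, k)) = e (i, j, k - r) := by
    intro r i j k
    apply ext_inner_basis e
    rintro ⟨a, b, c⟩
    rw [ContinuousLinearMap.star_eq_adjoint, ContinuousLinearMap.adjoint_inner_right]
    rw [h5 r a b c, ho, ho]
    exact if_congr (by constructor <;> (intro hh; simp [Prod.ext_iff] at hh ⊢; omega)) rfl rfl
  refine ⟨?_, ?_, ?_, ?_, ?_, ?_, ?_, ?_, ?_⟩
  · apply ext_basis e
    rintro ⟨i, j, k⟩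
    rw [ContinuousLinearMap.mul_apply, hAs, h2, ContinuousLinearMap.one_apply]
  · apply ext_basis e
    rintro ⟨i, j, k⟩
    rw [ContinuousLinearMap.mul_apply, hBs, h4, ContinuousLinearMap.one_apply]
  · show A * B' = B' * A
    apply ext_basis e
    rintro ⟨i, j, k⟩
    rw [ContinuousLinearMap.mul_apply, ContinuousLinearMap.mul_apply]
    cases j with
    | zero =>
      rw [h3, map_zero]
      cases i with
      | zero => rw [h1, map_zero]
      | succ i => rw [h2, h3]
    | succ j =>
      rw [h4]
      cases i with
      | zero => rw [h1, h1, map_zero]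
      | succ i => rw [h2, h2, h4]
  · show A * star B' = star B' * A
    apply ext_basis e
    rintro ⟨i, j, k⟩
    rw [ContinuousLinearMap.mul_apply, ContinuousLinearMap.mul_apply, hBs]
    cases i with
    | zero => rw [h1, h1, map_zero]
    | succ i => rw [h2, h2, hBs]
  · intro r
    show T' r * A = A * T' r
    apply ext_basis e
    rintro ⟨i, j, k⟩
    rw [ContinuousLinearMap.mul_apply, ContinuousLinearMap.mul_apply, h5]
    cases i with
    | zero => rw [h1, h1, map_zero]
    | succ i => rw [h2, h2, h5]
  · intro r
    show T' r * B' = B' * T' r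
    apply ext_basis e
    rintro ⟨i, j, k⟩
    rw [ContinuousLinearMap.mul_apply, ContinuousLinearMap.mul_apply, h5]
    cases j with
    | zero => rw [h3, h3, map_zero]
    | succ j => rw [h4, h4, h5]
  · intro r s
    apply ext_basis e
    rintro ⟨i, j, k⟩
    rw [ContinuousLinearMap.mul_apply, h5, h5, h5]
    have : k + s + r = k + (r + s) := by ring
    rw [this]
  · apply ext_basis e
    rintro ⟨i, j, k⟩
    rw [h5, add_zero, ContinuousLinearMap.one_apply]
  · intro r
    apply ext_basis e
    rintro ⟨i, j, k⟩
    rw [hTsb, h5, sub_eq_add_neg]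

def Ok (b : Bool × Bool) (n m : ℕ × ℕ) (r : ℤ) : Prop :=
  match b with
  | (false, false) => n.2 = n.1 ∧ m.2 = m.1 ∧ r = (m.1 : ℤ) - n.1
  | (false, true) => n.2 ≤ n.1 ∧ m.2 ≤ m.1 ∧ r = (m.1 : ℤ) - n.1
  | (true, false) => n.1 ≤ n.2 ∧ m.1 ≤ m.2 ∧ r = (m.2 : ℤ) - n.2
  | (true, true) => True

theorem B1_eq (A B' : H →L[ℂ] H) (T' : ℤ → (H →L[ℂ] H)) (r : ℤ) (n m : ℕ × ℕ) :
    B1 A B' T' r n m = SOqAux.Wd A B' T' (false, false) (n.1, n.1) (m.1, m.1) r := by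
  simp only [B1, SOqAux.Wd, SOqAux.W, cond_false, one_mul,
    ← ContinuousLinearMap.star_eq_adjoint, mul_assoc]

theorem B2_eq (A B' : H →L[ℂ] H) (T' : ℤ → (H →L[ℂ] H)) (r : ℤ) (n m : ℕ × ℕ) :
    B2 A B' T' r n m = SOqAux.Wd A B' T' (false, true) n m r := by
  simp only [B2, pj, SOqAux.Wd, SOqAux.W, SOqAux.pj', cond_false, cond_true, one_mul,
    ← ContinuousLinearMap.star_eq_adjoint, mul_assoc]

theorem B3_eq (A B' : H →L[ℂ] H) (T' : ℤ → (H →L[ℂ] H)) (r : ℤ) (n m : ℕ × ℕ) :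
    B3 A B' T' r n m = SOqAux.Wd A B' T' (true, false) n m r := by
  simp only [B3, pj, SOqAux.Wd, SOqAux.W, SOqAux.pj', cond_false, cond_true, one_mul,
    ← ContinuousLinearMap.star_eq_adjoint, mul_assoc]

theorem B4_eq (A B' : H →L[ℂ] H) (T' : ℤ → (H →L[ℂ] H)) (r : ℤ) (n m : ℕ × ℕ) :
    B4 A B' T' r n m = SOqAux.Wd A B' T' (true, true) n m r := by
  simp only [B4, pj, SOqAux.Wd, SOqAux.W, SOqAux.pj', cond_true, one_mul,
    ← ContinuousLinearMap.star_eq_adjoint, mul_assoc]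

theorem zero_mem (A B' : H →L[ℂ] H) (T' : ℤ → (H →L[ℂ] H)) :
    (0 : H →L[ℂ] H) ∈ TSet A B' T' :=
  Or.inl (Or.inl (Or.inl (Or.inl rfl)))

theorem Wd_mem (A B' : H →L[ℂ] H) (T' : ℤ → (H →L[ℂ] H)) (b : Bool × Bool)
    (n m : ℕ × ℕ) (r : ℤ) (hok : Ok b n m r) :
    SOqAux.Wd A B' T' b n m r ∈ TSet A B' T' := by
  obtain ⟨b1, b2⟩ := b
  obtain ⟨n1, n2⟩ := n
  obtain ⟨m1, m2⟩ := m
  simp only [TSet, Set.mem_union, Set.mem_setOf_eq, Set.mem_singleton_iff]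
  cases b1 <;> cases b2
  · obtain ⟨hn, hm, hr⟩ := hok
    simp only at hn hm hr
    subst hr
    refine Or.inl (Or.inl (Or.inl (Or.inr ⟨(n1, n2), (m1, m2), ?_⟩)))
    rw [B1_eq]
    simp only
    rw [hn, hm]
  · obtain ⟨hn, hm, hr⟩ := hok
    simp only at hn hm hr
    subst hr
    exact Or.inl (Or.inl (Or.inr ⟨(n1, n2), (m1, m2), hn, hm, (B2_eq A B' T' _ _ _)⟩))
  · obtain ⟨hn, hm, hr⟩ := hok
    simp only at hn hm hr
    subst hr
    exact Or.inl (Or.inr ⟨(n1, n2), (m1, m2), hn, hm, (B3_eq A B' T' _ _ _)⟩)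
  · exact Or.inr ⟨r, (n1, n2), (m1, m2), (B4_eq A B' T' _ _ _)⟩

theorem TSet_cases (A B' : H →L[ℂ] H) (T' : ℤ → (H →L[ℂ] H)) {x : H →L[ℂ] H}
    (hx : x ∈ TSet A B' T') :
    x = 0 ∨ ∃ b n m r, Ok b n m r ∧ x = SOqAux.Wd A B' T' b n m r := by
  simp only [TSet, Set.mem_union, Set.mem_setOf_eq, Set.mem_singleton_iff] at hx
  rcases hx with ((((h | ⟨n, m, rfl⟩) | ⟨n, m, h1n, h2n, rfl⟩) | ⟨n, m, h1n, h2n, rfl⟩) |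
    ⟨r, n, m, rfl⟩)
  · exact Or.inl h
  · exact Or.inr ⟨(false, false), (n.1, n.1), (m.1, m.1), _, ⟨rfl, rfl, rfl⟩,
      B1_eq A B' T' _ _ _⟩
  · exact Or.inr ⟨(false, true), n, m, _, ⟨h1n, h2n, rfl⟩, B2_eq A B' T' _ _ _⟩
  · exact Or.inr ⟨(true, false), n, m, _, ⟨h1n, h2n, rfl⟩, B3_eq A B' T' _ _ _⟩
  · exact Or.inr ⟨(true, true), n, m, r, trivial, B4_eq A B' T' _ _ _⟩

theorem Ok_star {b : Bool × Bool} {n m : ℕ × ℕ} {r : ℤ} (h : Ok b n m r) :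
    Ok b m n (-r) := by
  obtain ⟨b1, b2⟩ := b
  cases b1 <;> cases b2 <;> simp only [Ok] at h ⊢ <;> try trivial
  all_goals omega

end Helpers

theorem stmt1 {H : Type} [NormedAddCommGroup H] [InnerProductSpace ℂ H]
    [CompleteSpace H] (e : HilbertBasis (ℕ × ℕ × ℤ) ℂ H) (A B' : H →L[ℂ] H)
    (T' : ℤ → (H →L[ℂ] H)) (hyp : ShiftHyp e A B' T') :
    (∀ x ∈ TSet A B' T', ∀ y ∈ TSet A B' T', x * y ∈ TSet A B' T') ∧
    (∀ x ∈ TSet A B' T', adjoint x ∈ TSet A B' T') ∧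
    (∀ a ∈ TSet A B' T', a ≠ 0 →
      a * adjoint a * a = a ∧ adjoint a * a * adjoint a = adjoint a) := by
  have rel := rel_of_shiftHyp e A B' T' hyp
  refine ⟨?_, ?_, ?_⟩
  · intro x hx y hy
    rcases TSet_cases A B' T' hx with rfl | ⟨b, n, m, r, hob, rfl⟩
    · rw [zero_mul]; exact zero_mem A B' T'
    rcases TSet_cases A B' T' hy with rfl | ⟨c, p, q, s, hoc, rfl⟩
    · rw [mul_zero]; exact zero_mem A B' T'
    rw [SOqAux.Wd_mul_arrange rel]
    rcases SOqAux.W_mul_total rel.hX b.1 c.1 n.1 m.1 p.1 q.1 with h0 | ⟨n1', m1', he1, hc1⟩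
    · rw [h0, zero_mul]; exact zero_mem A B' T'
    rcases SOqAux.W_mul_total rel.hY b.2 c.2 n.2 m.2 p.2 q.2 with h0 | ⟨n2', m2', he2, hc2⟩
    · rw [h0, zero_mul, mul_zero]; exact zero_mem A B' T'
    rw [he1, he2]
    show SOqAux.Wd A B' T' (b.1 || c.1, b.2 || c.2) (n1', n2') (m1', m2') (r + s) ∈
      TSet A B' T'
    apply Wd_mem
    obtain ⟨b1, b2⟩ := b
    obtain ⟨c1, c2⟩ := c
    simp only at hc1 hc2 hob hoc ⊢
    cases b1 <;> cases b2 <;> cases c1 <;> cases c2 <;>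
      simp only [Ok, Bool.or_self, Bool.or_true, Bool.true_or, Bool.or_false,
        Bool.false_or] at hob hoc ⊢ <;>
      rcases hc1 with ⟨hle1, him1, rfl, rfl⟩ | ⟨hle1, him1, rfl, rfl⟩ <;>
      rcases hc2 with ⟨hle2, him2, rfl, rfl⟩ | ⟨hle2, him2, rfl, rfl⟩ <;>
      simp only [forall_const, reduceCtorEq, false_implies, IsEmpty.forall_iff] at him1 him2 <;>
      try trivial
    all_goals omega
  · intro x hx
    rcases TSet_cases A B' T' hx with rfl | ⟨b, n, m, r, hob, rfl⟩
    · rw [← ContinuousLinearMap.star_eq_adjoint, star_zero]; exact zero_mem A B' T'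
    rw [← ContinuousLinearMap.star_eq_adjoint, SOqAux.star_Wd rel]
    exact Wd_mem A B' T' _ _ _ _ (Ok_star hob)
  · intro a ha hne
    rcases TSet_cases A B' T' ha with rfl | ⟨b, n, m, r, hob, rfl⟩
    · exact absurd rfl hne
    constructor
    · rw [← ContinuousLinearMap.star_eq_adjoint]
      exact SOqAux.Wd_sandwich rel b n m r
    · rw [← ContinuousLinearMap.star_eq_adjoint, SOqAux.star_Wd rel]
      have h2 := SOqAux.Wd_sandwich rel b m n (-r)
      rw [SOqAux.star_Wd rel, neg_neg] at h2
      exact h2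


end SOq
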